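/- arXiv:1606.09382 — 3 statements merged into one kernel-verified Lean document; each statement's English description precedes it below -/
import Mathlib

section
/- Let ω > 0, let s ≥ 1 be an integer, and let 0 < ν < 1. Then lim_{a→∞} lim_{ε→0⁺} [ ∫_ε^a 1/((ω+x) x^{s+ν}) dx − Σ_{j=0}^{s−1} ((−1)^j / (ω^{j+1} (s+ν−j−1))) ε^{−(s+ν−j−1)} ] = (−1)^s π / (ω^{s+ν} sin(πν)); that is, the finite part integral of the divergent integral ∫_0^∞ 1/((ω+x) x^{s+ν}) dx equals (−1)^s π / (ω^{s+ν} sin πν). -/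
open MeasureTheory Filter Set


lemma beta_real {ν : ℝ} (hν0 : 0 < ν) (hν1 : ν < 1) :
    ∫ t in (0:ℝ)..1, t ^ (-ν) * (1 - t) ^ (ν - 1) = Real.pi / Real.sin (Real.pi * ν) := by
  have h1 : (0:ℝ) < 1 - ν := by linarith
  have hB : Complex.betaIntegral (1 - ν) ν = (Real.pi / Real.sin (Real.pi * ν) : ℝ) := by
    have := Complex.Gamma_mul_Gamma_eq_betaIntegral
      (s := (1 : ℂ) - ν) (t := (ν : ℂ)) (by simpa using h1) (by simpa using hν0)
    rw [show (1:ℂ) - ν + ν = 1 by ring, Complex.Gamma_one, one_mul] at this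
    rw [← this]
    have h2 := Complex.Gamma_mul_Gamma_one_sub (ν : ℂ)
    rw [mul_comm] at h2
    rw [h2]
    push_cast [Complex.ofReal_div, Complex.ofReal_sin]
    ring_nf
  have key : Complex.betaIntegral (1 - ν) ν
      = ((∫ t in (0:ℝ)..1, t ^ (-ν) * (1 - t) ^ (ν - 1) : ℝ) : ℂ) := by
    rw [Complex.betaIntegral, ← intervalIntegral.integral_ofReal]
    refine intervalIntegral.integral_congr_ae (Filter.Eventually.of_forall fun x hx => ?_)
    rw [Set.uIoc_of_le (by norm_num : (0:ℝ) ≤ 1)] at hx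
    have hx0 : (0:ℝ) ≤ x := hx.1.le
    have hx1 : (0:ℝ) ≤ 1 - x := by linarith [hx.2]
    rw [Complex.ofReal_mul, Complex.ofReal_cpow hx0, Complex.ofReal_cpow hx1]
    push_cast
    norm_num
  rw [key] at hB
  exact_mod_cast hB

lemma integral_one_add {ν : ℝ} (hν0 : 0 < ν) (hν1 : ν < 1) :
    ∫ x in Ioi (0:ℝ), x ^ (-ν) / (1 + x) = Real.pi / Real.sin (Real.pi * ν) := by
  have himg : (fun t : ℝ => t / (1 - t)) '' Ioo 0 1 = Ioi 0 := by
    ext y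
    constructor
    · rintro ⟨t, ⟨ht0, ht1⟩, rfl⟩
      exact div_pos ht0 (by linarith)
    · intro hy
      refine ⟨y / (1 + y), ⟨div_pos hy (by linarith [mem_Ioi.mp hy]), ?_⟩, ?_⟩
      · rw [div_lt_one (by linarith [mem_Ioi.mp hy])]; linarith [mem_Ioi.mp hy]
      · have hy0 : (0:ℝ) < y := hy
        field_simp
        ring
  have hderiv : ∀ t ∈ Ioo (0:ℝ) 1, HasDerivWithinAt (fun t : ℝ => t / (1 - t))
      (((1 - t) ^ 2)⁻¹) (Ioo 0 1) t := by
    intro t ht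
    have h1t : (1:ℝ) - t ≠ 0 := by have := ht.2; intro h; nlinarith [ht.2]
    have := (hasDerivAt_id t).div ((hasDerivAt_id t).const_sub 1) h1t
    exact this.hasDerivWithinAt.congr_deriv (by simp only [id]; rw [div_eq_mul_inv]; ring)
  have hinj : InjOn (fun t : ℝ => t / (1 - t)) (Ioo 0 1) := by
    intro t1 h1 t2 h2 h
    have e1 : (1:ℝ) - t1 ≠ 0 := by have := h1.2; intro hh; nlinarith
    have e2 : (1:ℝ) - t2 ≠ 0 := by have := h2.2; intro hh; nlinarith
    field_simp at h
    linarith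
  have := integral_image_eq_integral_abs_deriv_smul measurableSet_Ioo hderiv hinj
    (fun y => y ^ (-ν) / (1 + y))
  rw [himg] at this
  rw [this]
  have : ∀ t ∈ Ioo (0:ℝ) 1, |((1 - t) ^ 2)⁻¹| • ((t / (1 - t)) ^ (-ν) / (1 + t / (1 - t)))
      = t ^ (-ν) * (1 - t) ^ (ν - 1) := by
    intro t ht
    have ht0 : (0:ℝ) < t := ht.1
    have hu : (0:ℝ) < 1 - t := by linarith [ht.2]
    have e1 : (1:ℝ) + t / (1 - t) = (1 - t)⁻¹ := by field_simp; ring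
    rw [smul_eq_mul, abs_of_pos (by positivity), e1,
      Real.div_rpow ht0.le hu.le, Real.rpow_neg hu.le,
      Real.rpow_sub hu, Real.rpow_one]
    field_simp
  rw [setIntegral_congr_fun measurableSet_Ioo this, ← integral_Ioc_eq_integral_Ioo,
    ← intervalIntegral.integral_of_le (by norm_num : (0:ℝ) ≤ 1)]
  exact beta_real hν0 hν1

lemma contOn_aux {ω ν : ℝ} (hω : 0 < ω) :
    ContinuousOn (fun x : ℝ => x ^ (-ν) / (ω + x)) (Ioi 0) := by
  apply ContinuousOn.div
  · exact fun x hx => (Real.continuousAt_rpow_const x (-ν) (Or.inl (ne_of_gt hx))).continuousWithinAt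
  · exact (continuous_const.add continuous_id).continuousOn
  · intro x hx
    have : (0:ℝ) < x := hx
    positivity

lemma integrable_aux {ω ν : ℝ} (hω : 0 < ω) (hν0 : 0 < ν) (hν1 : ν < 1) :
    IntegrableOn (fun x : ℝ => x ^ (-ν) / (ω + x)) (Ioi 0) := by
  have hmeas : AEStronglyMeasurable (fun x : ℝ => x ^ (-ν) / (ω + x)) (volume.restrict (Ioi 0)) :=
    (contOn_aux hω).aestronglyMeasurable measurableSet_Ioi
  have h1 : IntegrableOn (fun x : ℝ => x ^ (-ν) / (ω + x)) (Ioc 0 1) := by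
    have hg : IntegrableOn (fun x : ℝ => x ^ (-ν) * ω⁻¹) (Ioc 0 1) := by
      have := (intervalIntegral.intervalIntegrable_rpow' (a := 0) (b := 1)
        (r := -ν) (by linarith)).mul_const ω⁻¹
      rwa [intervalIntegrable_iff_integrableOn_Ioc_of_le (by norm_num)] at this
    refine Integrable.mono hg (hmeas.mono_set Ioc_subset_Ioi_self) ?_
    filter_upwards [ae_restrict_mem measurableSet_Ioc] with x hx
    have hx0 : (0:ℝ) < x := hx.1
    have hb : x ^ (-ν) / (ω + x) ≤ x ^ (-ν) * ω⁻¹ := by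
      rw [div_eq_mul_inv]
      gcongr
      linarith
    rw [Real.norm_eq_abs, Real.norm_eq_abs, abs_of_nonneg (by positivity),
      abs_of_nonneg (by positivity)]
    exact hb
  have h2 : IntegrableOn (fun x : ℝ => x ^ (-ν) / (ω + x)) (Ioi 1) := by
    have hg : IntegrableOn (fun x : ℝ => x ^ (-ν - 1)) (Ioi 1) :=
      integrableOn_Ioi_rpow_of_lt (by linarith) one_pos
    refine Integrable.mono hg (hmeas.mono_set (Ioi_subset_Ioi zero_le_one)) ?_
    filter_upwards [ae_restrict_mem measurableSet_Ioi] with x hx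
    have hx1 : (1:ℝ) < x := hx
    have hx0 : (0:ℝ) < x := by linarith
    have hb : x ^ (-ν) / (ω + x) ≤ x ^ (-ν - 1) := by
      have : x ^ (-ν - 1) = x ^ (-ν) / x := by
        rw [Real.rpow_sub hx0, Real.rpow_one]
      rw [this]
      gcongr
      linarith
    rw [Real.norm_eq_abs, Real.norm_eq_abs, abs_of_nonneg (by positivity),
      abs_of_nonneg (by positivity)]
    exact hb
  have : Ioi (0:ℝ) = Ioc 0 1 ∪ Ioi 1 := (Ioc_union_Ioi_eq_Ioi zero_le_one).symm
  rw [this]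
  exact h1.union h2

lemma integral_omega {ω ν : ℝ} (hω : 0 < ω) (hν0 : 0 < ν) (hν1 : ν < 1) :
    ∫ x in Ioi (0:ℝ), x ^ (-ν) / (ω + x)
      = ω ^ (-ν) * (Real.pi / Real.sin (Real.pi * ν)) := by
  have key := MeasureTheory.integral_comp_mul_left_Ioi
    (fun x : ℝ => x ^ (-ν) / (ω + x)) 0 hω
  rw [mul_zero] at key
  have hcongr : ∀ x ∈ Ioi (0:ℝ), (ω * x) ^ (-ν) / (ω + ω * x)
      = (ω ^ (-ν) * ω⁻¹) * (x ^ (-ν) / (1 + x)) := by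
    intro x hx
    have hx0 : (0:ℝ) < x := hx
    rw [Real.mul_rpow hω.le hx0.le, show ω + ω * x = ω * (1 + x) by ring]
    field_simp
  rw [setIntegral_congr_fun measurableSet_Ioi hcongr, integral_const_mul,
    integral_one_add hν0 hν1] at key
  have hωne : ω ≠ 0 := ne_of_gt hω
  have := congrArg (fun z => ω * z) key
  simp only [smul_eq_mul, ← mul_assoc, mul_inv_cancel₀ hωne, one_mul] at this
  rw [← this, show ω * ω ^ (-ν) * ω⁻¹ = ω ^ (-ν) by field_simp]


lemma partial_frac {ω x : ℝ} (hω : 0 < ω) (hx : 0 < x) (s : ℕ) :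
    ∑ j ∈ Finset.range s, (-1:ℝ)^j * x^j / ω^(j+1)
      = (1 - (-1:ℝ)^s * x^s / ω^s) / (ω + x) := by
  have hωne : ω ≠ 0 := ne_of_gt hω
  have hr0 : -x/ω < 0 := div_neg_of_neg_of_pos (by linarith) hω
  have hr : (-x/ω) ≠ 1 := by linarith
  have hg := geom_sum_eq hr s
  have hterms : ∀ j ∈ Finset.range s, (-1:ℝ)^j * x^j / ω^(j+1) = (-x/ω)^j * ω⁻¹ := by
    intro j _
    rw [div_pow, neg_pow]
    field_simp [pow_succ]
    ring
  rw [Finset.sum_congr rfl hterms, ← Finset.sum_mul, hg,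
    show ((-x/ω):ℝ)^s = (-1:ℝ)^s * x^s / ω^s by rw [neg_div, neg_pow, div_pow]; ring]
  have hne2 : -x/ω - 1 ≠ 0 := by linarith
  have hωx : ω + x ≠ 0 := by positivity
  rw [div_mul_eq_mul_div, div_eq_div_iff hne2 hωx]
  field_simp
  ring

lemma integrand_identity {ω x ν : ℝ} (hω : 0 < ω) (hx : 0 < x) (hν0 : 0 < ν) (s : ℕ) :
    1 / ((ω + x) * x ^ ((s : ℝ) + ν))
      = (∑ j ∈ Finset.range s, (-1:ℝ)^j / ω^(j+1) * x ^ ((j:ℝ) - ((s:ℝ) + ν)))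
        + (-1:ℝ)^s / ω^s * (x ^ (-ν) / (ω + x)) := by
  have hωx : (0:ℝ) < ω + x := by positivity
  have hP : (0:ℝ) < x ^ ((s:ℝ) + ν) := Real.rpow_pos_of_pos hx _
  have hterm : ∀ j ∈ Finset.range s, (-1:ℝ)^j / ω^(j+1) * x ^ ((j:ℝ) - ((s:ℝ) + ν))
      = ((-1:ℝ)^j * x^j / ω^(j+1)) / x ^ ((s:ℝ) + ν) := by
    intro j _
    rw [Real.rpow_sub hx, Real.rpow_natCast]
    ring
  have hxν : x ^ (-ν) = x ^ s / x ^ ((s:ℝ) + ν) := by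
    rw [← Real.rpow_natCast x s, ← Real.rpow_sub hx]
    norm_num
  rw [Finset.sum_congr rfl hterm, ← Finset.sum_div, partial_frac hω hx s, hxν]
  have hωne : ω ≠ 0 := ne_of_gt hω
  field_simp
  ring

/-- For `ω > 0`, an integer `s ≥ 1`, and `0 < ν < 1`, the finite part
integral of the divergent integral `∫_0^∞ 1/((ω+x) x^{s+ν}) dx` equals
`(−1)^s π/(ω^{s+ν} sin(πν))`: the inner `ε → 0⁺` limit defines the finite part `F a` over
`[0,a]`, and `F a → (−1)^s π/(ω^{s+ν} sin πν)` as `a → ∞`. -/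
theorem finite_part_stieltjes_kernel (ω : ℝ) (hω : 0 < ω) (s : ℕ) (hs : 1 ≤ s)
    (ν : ℝ) (hν0 : 0 < ν) (hν1 : ν < 1) (F : ℝ → ℝ)
    (hF : ∀ a : ℝ, 0 < a → Tendsto (fun ε : ℝ =>
        (∫ x in ε..a, 1 / ((ω + x) * x ^ ((s : ℝ) + ν)))
        - (∑ j ∈ Finset.range s,
            (-1 : ℝ) ^ j / (ω ^ (j + 1) * ((s : ℝ) + ν - j - 1)) *
              ε ^ (-((s : ℝ) + ν - j - 1))))
      (nhdsWithin 0 (Ioi 0)) (nhds (F a))) :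
    Tendsto F atTop
      (nhds ((-1 : ℝ) ^ s * Real.pi /
        (ω ^ ((s : ℝ) + ν) * Real.sin (Real.pi * ν)))) := by
  set f : ℝ → ℝ := fun x => x ^ (-ν) / (ω + x) with hf
  have hd : ∀ j, j ∈ Finset.range s → 0 < (s:ℝ) + ν - j - 1 := by
    intro j hj
    have : (j:ℝ) + 1 ≤ s := by exact_mod_cast Nat.succ_le_of_lt (Finset.mem_range.mp hj)
    linarith
  -- Step A: formula for F a when a > 0
  have hFa : ∀ a : ℝ, 0 < a → F a = (-1:ℝ)^s / ω^s * (∫ x in Ioc (0:ℝ) a, f x)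
      - ∑ j ∈ Finset.range s,
          (-1:ℝ)^j / (ω^(j+1) * ((s:ℝ) + ν - j - 1)) * a ^ (-((s:ℝ) + ν - j - 1)) := by
    intro a ha
    -- integrability on Icc 0 a
    have hIcc : IntegrableOn f (Icc 0 a) := by
      rw [integrableOn_Icc_iff_integrableOn_Ioc]
      exact (integrable_aux hω hν0 hν1).mono_set Ioc_subset_Ioi_self
    -- limit of ε ↦ ∫ t in Ioc 0 ε, f
    have hS : Tendsto (fun ε : ℝ => ∫ t in Ioc (0:ℝ) ε, f t) (nhdsWithin 0 (Ioi 0)) (nhds 0) := by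
      have hcont := intervalIntegral.continuousOn_primitive (f := f) (μ := volume) hIcc
      have h0 : (0:ℝ) ∈ Icc (0:ℝ) a := ⟨le_refl _, ha.le⟩
      have := (hcont 0 h0).tendsto
      rw [show (Ioc (0:ℝ) 0) = ∅ by simp] at this
      simp only [setIntegral_empty] at this
      refine this.mono_left ?_
      rw [← nhdsWithin_Ioo_eq_nhdsGT ha]
      exact nhdsWithin_mono 0 Ioo_subset_Icc_self
    -- limit of ε ↦ ∫ x in ε..a, f
    have hT : Tendsto (fun ε : ℝ => ∫ x in ε..a, f x) (nhdsWithin 0 (Ioi 0))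
        (nhds (∫ x in Ioc (0:ℝ) a, f x)) := by
      have heq : ∀ᶠ ε in nhdsWithin 0 (Ioi 0),
          (∫ x in Ioc (0:ℝ) a, f x) - (∫ t in Ioc (0:ℝ) ε, f t) = ∫ x in ε..a, f x := by
        filter_upwards [Ioo_mem_nhdsGT_of_mem (by constructor <;> [rfl; exact ha] :
          (0:ℝ) ∈ Ico 0 a)] with ε hε
        have h1 : IntervalIntegrable f volume 0 ε := by
          rw [intervalIntegrable_iff_integrableOn_Ioc_of_le hε.1.le]
          exact hIcc.mono_set (Ioc_subset_Icc_self.trans (Icc_subset_Icc le_rfl hε.2.le))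
        have h2 : IntervalIntegrable f volume ε a := by
          rw [intervalIntegrable_iff_integrableOn_Ioc_of_le hε.2.le]
          exact hIcc.mono_set ((Ioc_subset_Ioc hε.1.le le_rfl).trans Ioc_subset_Icc_self)
        have := intervalIntegral.integral_add_adjacent_intervals h1 h2
        rw [← intervalIntegral.integral_of_le ha.le, ← this,
          ← intervalIntegral.integral_of_le hε.1.le]
        ring
      have h' : Tendsto (fun ε : ℝ => (∫ x in Ioc (0:ℝ) a, f x) - ∫ t in Ioc (0:ℝ) ε, f t)
          (nhdsWithin 0 (Ioi 0)) (nhds ((∫ x in Ioc (0:ℝ) a, f x) - 0)) :=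
        tendsto_const_nhds.sub hS
      rw [sub_zero] at h'
      exact Tendsto.congr' heq h'
    -- explicit computation of the expression for ε ∈ Ioo 0 a
    have key : ∀ᶠ ε in nhdsWithin 0 (Ioi 0),
        (∫ x in ε..a, 1 / ((ω + x) * x ^ ((s : ℝ) + ν)))
        - (∑ j ∈ Finset.range s,
            (-1 : ℝ) ^ j / (ω ^ (j + 1) * ((s : ℝ) + ν - j - 1)) *
              ε ^ (-((s : ℝ) + ν - j - 1)))
        = (-1:ℝ)^s / ω^s * (∫ x in ε..a, f x)
          - ∑ j ∈ Finset.range s,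
              (-1:ℝ)^j / (ω^(j+1) * ((s:ℝ) + ν - j - 1)) * a ^ (-((s:ℝ) + ν - j - 1)) := by
      filter_upwards [Ioo_mem_nhdsGT_of_mem (by constructor <;> [rfl; exact ha] :
        (0:ℝ) ∈ Ico 0 a)] with ε hε
      have hε0 : 0 < ε := hε.1
      have hsub : uIcc ε a ⊆ Ioi 0 := by
        rw [uIcc_of_le hε.2.le]
        exact fun x hx => lt_of_lt_of_le hε0 hx.1
      have hIntf : IntervalIntegrable f volume ε a :=
        ((contOn_aux hω).mono hsub).intervalIntegrable
      have hIntj : ∀ j ∈ Finset.range s, IntervalIntegrable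
          (fun x : ℝ => (-1:ℝ)^j / ω^(j+1) * x ^ ((j:ℝ) - ((s:ℝ) + ν))) volume ε a := by
        intro j _
        refine (ContinuousOn.intervalIntegrable ?_)
        refine continuousOn_const.mul ?_
        exact fun x hx => (Real.continuousAt_rpow_const x _
          (Or.inl (ne_of_gt (hsub hx)))).continuousWithinAt
      have hIntSum : IntervalIntegrable
          (fun x : ℝ => ∑ j ∈ Finset.range s, (-1:ℝ)^j / ω^(j+1) * x ^ ((j:ℝ) - ((s:ℝ) + ν)))
          volume ε a := by
        refine ContinuousOn.intervalIntegrable (continuousOn_finset_sum _ fun j _ => ?_)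
        refine continuousOn_const.mul ?_
        exact fun x hx => (Real.continuousAt_rpow_const x _
          (Or.inl (ne_of_gt (hsub hx)))).continuousWithinAt
      have eq1 : (∫ x in ε..a, 1 / ((ω + x) * x ^ ((s : ℝ) + ν)))
          = (∑ j ∈ Finset.range s, ∫ x in ε..a,
              (-1:ℝ)^j / ω^(j+1) * x ^ ((j:ℝ) - ((s:ℝ) + ν)))
            + (-1:ℝ)^s / ω^s * (∫ x in ε..a, f x) := by
        rw [intervalIntegral.integral_congr (g := fun x =>
            (∑ j ∈ Finset.range s, (-1:ℝ)^j / ω^(j+1) * x ^ ((j:ℝ) - ((s:ℝ) + ν)))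
            + (-1:ℝ)^s / ω^s * f x)
          (fun x hx => integrand_identity hω (hsub hx) hν0 s),
          intervalIntegral.integral_add hIntSum (hIntf.const_mul _),
          intervalIntegral.integral_finset_sum hIntj,
          intervalIntegral.integral_const_mul]
      have eq2 : ∀ j ∈ Finset.range s, (∫ x in ε..a,
            (-1:ℝ)^j / ω^(j+1) * x ^ ((j:ℝ) - ((s:ℝ) + ν)))
          = (-1:ℝ)^j / (ω^(j+1) * ((s:ℝ) + ν - j - 1)) * ε ^ (-((s:ℝ) + ν - j - 1))
            - (-1:ℝ)^j / (ω^(j+1) * ((s:ℝ) + ν - j - 1)) * a ^ (-((s:ℝ) + ν - j - 1)) := by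
        intro j hj
        have hdj := hd j hj
        have hne : ((j:ℝ) - ((s:ℝ) + ν)) ≠ -1 := by
          intro h
          have : (s:ℝ) + ν - j - 1 = 0 := by linarith
          linarith
        have hmem : (0:ℝ) ∉ uIcc ε a := fun h => lt_irrefl 0 (mem_Ioi.mp (hsub h))
        rw [intervalIntegral.integral_const_mul, integral_rpow (Or.inr ⟨hne, hmem⟩),
          show (j:ℝ) - ((s:ℝ) + ν) + 1 = -((s:ℝ) + ν - (j:ℝ) - 1) by ring]
        have hωj : (ω:ℝ)^(j+1) ≠ 0 := by positivity
        set D := (s:ℝ) + ν - (j:ℝ) - 1 with hD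
        have hDne : D ≠ 0 := ne_of_gt hdj
        field_simp
        ring
      rw [eq1, Finset.sum_congr rfl eq2, Finset.sum_sub_distrib]
      ring
    exact tendsto_nhds_unique (hF a ha) (Tendsto.congr' (key.mono fun x hx => hx.symm)
      ((hT.const_mul _).sub tendsto_const_nhds))
  -- Step B: limit as a → ∞
  have hlim1 : Tendsto (fun a : ℝ => (-1:ℝ)^s / ω^s * (∫ x in Ioc (0:ℝ) a, f x)) atTop
      (nhds ((-1:ℝ)^s / ω^s * (ω ^ (-ν) * (Real.pi / Real.sin (Real.pi * ν))))) := by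
    have h1 := MeasureTheory.intervalIntegral_tendsto_integral_Ioi (f := f) (μ := volume)
      (l := atTop) (b := id) 0 (integrable_aux hω hν0 hν1) tendsto_id
    rw [integral_omega hω hν0 hν1] at h1
    refine Tendsto.const_mul _ (h1.congr' ?_)
    filter_upwards [eventually_ge_atTop (0:ℝ)] with a ha
    exact intervalIntegral.integral_of_le ha
  have hlim2 : Tendsto (fun a : ℝ => ∑ j ∈ Finset.range s,
      (-1:ℝ)^j / (ω^(j+1) * ((s:ℝ) + ν - j - 1)) * a ^ (-((s:ℝ) + ν - j - 1))) atTop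
      (nhds 0) := by
    have : Tendsto (fun a : ℝ => ∑ j ∈ Finset.range s,
        (-1:ℝ)^j / (ω^(j+1) * ((s:ℝ) + ν - j - 1)) * a ^ (-((s:ℝ) + ν - j - 1))) atTop
        (nhds (∑ j ∈ Finset.range s, 0)) := by
      refine tendsto_finset_sum _ fun j hj => ?_
      simpa using (tendsto_rpow_neg_atTop (hd j hj)).const_mul
        ((-1:ℝ)^j / (ω^(j+1) * ((s:ℝ) + ν - j - 1)))
    simpa using this
  have hG : Tendsto (fun a : ℝ => (-1:ℝ)^s / ω^s * (∫ x in Ioc (0:ℝ) a, f x)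
      - ∑ j ∈ Finset.range s,
          (-1:ℝ)^j / (ω^(j+1) * ((s:ℝ) + ν - j - 1)) * a ^ (-((s:ℝ) + ν - j - 1))) atTop
      (nhds ((-1:ℝ)^s / ω^s * (ω ^ (-ν) * (Real.pi / Real.sin (Real.pi * ν))))) := by
    simpa using hlim1.sub hlim2
  have hval : (-1:ℝ)^s / ω^s * (ω ^ (-ν) * (Real.pi / Real.sin (Real.pi * ν)))
      = (-1 : ℝ) ^ s * Real.pi / (ω ^ ((s : ℝ) + ν) * Real.sin (Real.pi * ν)) := by
    have hsin : Real.sin (Real.pi * ν) ≠ 0 := by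
      refine ne_of_gt (Real.sin_pos_of_pos_of_lt_pi ?_ ?_)
      · positivity
      · nlinarith [Real.pi_pos]
    have hωs : ω ^ ((s:ℝ) + ν) = ω ^ s * ω ^ ν := by
      rw [Real.rpow_add hω, Real.rpow_natCast]
    rw [hωs, Real.rpow_neg hω.le]
    have h1 : (ω:ℝ)^s ≠ 0 := by positivity
    have h2 : ω ^ ν ≠ 0 := by positivity
    field_simp
  rw [← hval]
  refine hG.congr' ?_
  filter_upwards [eventually_gt_atTop (0:ℝ)] with a ha
  exact (hFa a ha).symm
end

section
/- For every ν with 0 < ν < 1 and every ω > 1, ∫_0^1 1/((1−x)^ν (ω−x)) dx = Σ_{s=0}^∞ (Γ(s+1) Γ(1−ν) / Γ(s−ν+2)) ω^{−(s+1)}, the series on the right converging for ω > 1. -/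
open MeasureTheory Filter Set

lemma integrable_aux_s18 (ν : ℝ) (hν1 : ν < 1) (s : ℕ) :
    IntervalIntegrable (fun x : ℝ => x ^ s * (1 - x) ^ (-ν)) volume 0 1 := by
  have h1 : IntervalIntegrable (fun x : ℝ => (1 - x) ^ (-ν)) volume 0 1 := by
    have := (intervalIntegral.intervalIntegrable_rpow' (a := 0) (b := 1) (r := -ν)
      (by linarith)).comp_sub_left 1
    simpa using this.symm
  simpa [mul_comm] using h1.continuousOn_mul (Continuous.continuousOn (by continuity))

lemma betaReal (a b : ℝ) (ha : 0 < a) (hb : 0 < b) :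
    ∫ x in (0:ℝ)..1, x ^ (a - 1) * (1 - x) ^ (b - 1)
      = Real.Gamma a * Real.Gamma b / Real.Gamma (a + b) := by
  have hG : Complex.Gamma a * Complex.Gamma b
      = Complex.Gamma (a + b) * Complex.betaIntegral a b :=
    Complex.Gamma_mul_Gamma_eq_betaIntegral (by simpa using ha) (by simpa using hb)
  have hcoe : Complex.betaIntegral a b
      = ((∫ x in (0:ℝ)..1, x ^ (a - 1) * (1 - x) ^ (b - 1) : ℝ) : ℂ) := by
    rw [Complex.betaIntegral, ← intervalIntegral.integral_ofReal]
    refine intervalIntegral.integral_congr fun x hx => ?_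
    rw [uIcc_of_le zero_le_one] at hx
    rw [Complex.ofReal_mul, Complex.ofReal_cpow hx.1,
      Complex.ofReal_cpow (by linarith [hx.2] : (0:ℝ) ≤ 1 - x)]
    push_cast
    ring
  have key : Real.Gamma a * Real.Gamma b
      = Real.Gamma (a + b) * ∫ x in (0:ℝ)..1, x ^ (a - 1) * (1 - x) ^ (b - 1) := by
    rw [hcoe] at hG
    rw [show ((a:ℂ) + (b:ℂ)) = ((a + b : ℝ) : ℂ) by push_cast; ring] at hG
    rw [Complex.Gamma_ofReal, Complex.Gamma_ofReal, Complex.Gamma_ofReal] at hG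
    exact_mod_cast hG
  rw [eq_div_iff (Real.Gamma_pos_of_pos (by positivity)).ne']
  linarith [key]

lemma coeff_eq (ν : ℝ) (hν0 : 0 < ν) (hν1 : ν < 1) (s : ℕ) :
    Real.Gamma ((s : ℝ) + 1) * Real.Gamma (1 - ν) / Real.Gamma ((s : ℝ) - ν + 2)
      = ∫ x in (0:ℝ)..1, x ^ s * (1 - x) ^ (-ν) := by
  have h := betaReal ((s : ℝ) + 1) (1 - ν) (by positivity) (by linarith)
  rw [show ((s:ℝ) + 1) - 1 = (s:ℝ) by ring, show (1 - ν) - 1 = -ν by ring,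
    show ((s:ℝ) + 1) + (1 - ν) = (s:ℝ) - ν + 2 by ring] at h
  rw [← h]
  refine intervalIntegral.integral_congr fun x hx => ?_
  rw [uIcc_of_le zero_le_one] at hx
  rw [Real.rpow_natCast]

/-- For every `0 < ν < 1` and `ω > 1`,
`∫_0^1 1/((1−x)^ν (ω−x)) dx = Σ_{s=0}^∞ (Γ(s+1)Γ(1−ν)/Γ(s−ν+2)) ω^{−(s+1)}`, the series
converging for `ω > 1`. -/
theorem branch_point_contribution_expansion (ν : ℝ) (hν0 : 0 < ν) (hν1 : ν < 1)
    (ω : ℝ) (hω : 1 < ω) :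
    Summable (fun s : ℕ =>
      Real.Gamma ((s : ℝ) + 1) * Real.Gamma (1 - ν) / Real.Gamma ((s : ℝ) - ν + 2) /
        ω ^ (s + 1)) ∧
    (∫ x in (0:ℝ)..1, 1 / ((1 - x) ^ ν * (ω - x)))
      = ∑' s : ℕ,
          Real.Gamma ((s : ℝ) + 1) * Real.Gamma (1 - ν) / Real.Gamma ((s : ℝ) - ν + 2) /
            ω ^ (s + 1) := by
  have hω0 : (0:ℝ) < ω := by linarith
  set f : ℕ → ℝ → ℝ := fun s x => x ^ s * (1 - x) ^ (-ν) / ω ^ (s + 1) with hfdef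
  set c : ℕ → ℝ := fun s => ∫ x in (0:ℝ)..1, x ^ s * (1 - x) ^ (-ν) with hcdef
  have hcoeff : ∀ s : ℕ,
      Real.Gamma ((s : ℝ) + 1) * Real.Gamma (1 - ν) / Real.Gamma ((s : ℝ) - ν + 2) / ω ^ (s + 1)
      = c s / ω ^ (s + 1) := fun s => congrArg (· / ω ^ (s + 1)) (coeff_eq ν hν0 hν1 s)
  have hcnonneg : ∀ s : ℕ, 0 ≤ c s := fun s =>
    intervalIntegral.integral_nonneg zero_le_one fun x hx =>
      mul_nonneg (pow_nonneg hx.1 _) (Real.rpow_nonneg (by linarith [hx.2]) _)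
  have hcbound : ∀ s : ℕ, c s ≤ c 0 := by
    intro s
    refine intervalIntegral.integral_mono_on zero_le_one (integrable_aux_s18 ν hν1 s)
      (integrable_aux_s18 ν hν1 0) fun x hx => ?_
    have h1 : x ^ s ≤ 1 := pow_le_one₀ hx.1 hx.2
    have h2 : (0:ℝ) ≤ (1 - x) ^ (-ν) := Real.rpow_nonneg (by linarith [hx.2]) _
    calc x ^ s * (1 - x) ^ (-ν) ≤ 1 * (1 - x) ^ (-ν) := by nlinarith
      _ = x ^ 0 * (1 - x) ^ (-ν) := by ring
  have hS : Summable (fun s : ℕ => c s / ω ^ (s + 1)) := by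
    refine Summable.of_nonneg_of_le (fun s => div_nonneg (hcnonneg s) (by positivity))
      (fun s => ?_) (((summable_geometric_of_lt_one (by positivity)
        (inv_lt_one_of_one_lt₀ hω)).mul_left (c 0 * ω⁻¹)))
    have h1 : c s / ω ^ (s + 1) ≤ c 0 / ω ^ (s + 1) := by gcongr; exact hcbound s
    have h2 : c 0 / ω ^ (s + 1) = c 0 * ω⁻¹ * (ω⁻¹) ^ s := by
      rw [div_eq_mul_inv, ← inv_pow, pow_succ]; ring
    linarith
  have hSgoal : Summable (fun s : ℕ =>
      Real.Gamma ((s : ℝ) + 1) * Real.Gamma (1 - ν) / Real.Gamma ((s : ℝ) - ν + 2) /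
        ω ^ (s + 1)) := hS.congr fun s => (hcoeff s).symm
  refine ⟨hSgoal, ?_⟩
  -- integrability of each f s on Ioc 0 1
  have hint : ∀ s : ℕ, IntegrableOn (f s) (Ioc (0:ℝ) 1) := by
    intro s
    have h := (integrable_aux_s18 ν hν1 s).div_const (ω ^ (s + 1))
    rwa [intervalIntegrable_iff_integrableOn_Ioc_of_le zero_le_one] at h
  -- pointwise expansion
  have hpt : ∀ x ∈ Ioc (0:ℝ) 1, 1 / ((1 - x) ^ ν * (ω - x)) = ∑' s : ℕ, f s x := by
    intro x hx
    rcases eq_or_lt_of_le hx.2 with h1 | h1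
    · subst h1
      simp [hfdef, sub_self, Real.zero_rpow hν0.ne', Real.zero_rpow (neg_lt_zero.mpr hν0).ne]
    · have h1x : (0:ℝ) < 1 - x := by linarith
      have hωx : (0:ℝ) < ω - x := by linarith
      have hr0 : (0:ℝ) ≤ x / ω := div_nonneg hx.1.le hω0.le
      have hr1 : x / ω < 1 := by rw [div_lt_one hω0]; linarith
      have hterm : ∀ s : ℕ, f s x = ((1 - x) ^ (-ν) / ω) * (x / ω) ^ s := by
        intro s
        simp only [hfdef]
        rw [div_pow, pow_succ]
        field_simp
      rw [tsum_congr hterm, tsum_mul_left, tsum_geometric_of_lt_one hr0 hr1,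
        Real.rpow_neg h1x.le]
      have h2 : (1 - x / ω) = (ω - x) / ω := by field_simp
      rw [h2]
      have h3 : (1 - x) ^ ν ≠ 0 := (Real.rpow_pos_of_pos h1x ν).ne'
      field_simp
  -- measurability
  have hmeas : ∀ s : ℕ, AEStronglyMeasurable (f s) (volume.restrict (Ioc (0:ℝ) 1)) :=
    fun s => (hint s).aestronglyMeasurable
  -- finiteness of the sum of lintegrals
  have heval : ∀ s : ℕ, ∫⁻ x in Ioc (0:ℝ) 1, ‖f s x‖₊ = ENNReal.ofReal (c s / ω ^ (s + 1)) := by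
    intro s
    have hnn : 0 ≤ᵐ[volume.restrict (Ioc (0:ℝ) 1)] f s := by
      filter_upwards [ae_restrict_mem measurableSet_Ioc] with x hx
      exact div_nonneg (mul_nonneg (pow_nonneg hx.1.le _)
        (Real.rpow_nonneg (by linarith [hx.2]) _)) (by positivity)
    have h := ofReal_integral_eq_lintegral_ofReal (hint s) hnn
    have h2 : ∫ x in Ioc (0:ℝ) 1, f s x = c s / ω ^ (s + 1) := by
      rw [← intervalIntegral.integral_of_le zero_le_one, hcdef, ← intervalIntegral.integral_div]
    rw [h2] at h
    rw [h]
    refine lintegral_congr_ae ?_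
    filter_upwards [hnn] with x hx
    exact Real.enorm_eq_ofReal hx
  have hfin : ∑' s : ℕ, ∫⁻ x in Ioc (0:ℝ) 1, ‖f s x‖₊ ≠ ⊤ := by
    simp only [heval]
    rw [← ENNReal.ofReal_tsum_of_nonneg (fun s => div_nonneg (hcnonneg s) (by positivity)) hS]
    exact ENNReal.ofReal_ne_top
  calc (∫ x in (0:ℝ)..1, 1 / ((1 - x) ^ ν * (ω - x)))
      = ∫ x in Ioc (0:ℝ) 1, 1 / ((1 - x) ^ ν * (ω - x)) :=
        intervalIntegral.integral_of_le zero_le_one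
    _ = ∫ x in Ioc (0:ℝ) 1, ∑' s : ℕ, f s x := setIntegral_congr_fun measurableSet_Ioc hpt
    _ = ∑' s : ℕ, ∫ x in Ioc (0:ℝ) 1, f s x := integral_tsum hmeas hfin
    _ = ∑' s : ℕ,
          Real.Gamma ((s : ℝ) + 1) * Real.Gamma (1 - ν) / Real.Gamma ((s : ℝ) - ν + 2) /
            ω ^ (s + 1) := by
        refine tsum_congr fun s => ?_
        rw [hcoeff s, ← intervalIntegral.integral_of_le zero_le_one, hcdef,
          ← intervalIntegral.integral_div]
end

section
/- For every ν with 0 < ν < 1 and every ω > 1, ∫_0^∞ 1/((1+x)^ν (ω+x)) dx = −Σ_{s=0}^∞ (Γ(s+1) Γ(1−ν) / Γ(s−ν+2)) ω^{−(s+1)} + (π / sin(πν)) Σ_{s=0}^∞ (Γ(ν+s) / (Γ(ν) s!)) ω^{−(s+ν)}, both series on the right converging for ω > 1. -/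
open MeasureTheory Filter Set

lemma betaReal_integrable {p q : ℝ} (hp : 0 < p) (hq : 0 < q) :
    IntegrableOn (fun t : ℝ => t ^ (p - 1) * (1 - t) ^ (q - 1)) (Ioo (0:ℝ) 1) := by
  have hC : IntervalIntegrable (fun x : ℝ => (x:ℂ) ^ ((p:ℂ) - 1) * (1 - (x:ℂ)) ^ ((q:ℂ) - 1))
      volume 0 1 := Complex.betaIntegral_convergent (by simpa using hp) (by simpa using hq)
  have hC' : IntegrableOn (fun x : ℝ => (x:ℂ) ^ ((p:ℂ) - 1) * (1 - (x:ℂ)) ^ ((q:ℂ) - 1))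
      (Ioo (0:ℝ) 1) := ((intervalIntegrable_iff_integrableOn_Ioc_of_le zero_le_one).mp hC).mono_set
        Ioo_subset_Ioc_self
  have := hC'.re
  refine (IntegrableOn.congr_fun this ?_ measurableSet_Ioo)
  intro x hx
  have hx0 : (0:ℝ) ≤ x := le_of_lt hx.1
  have hx1 : (0:ℝ) ≤ 1 - x := by linarith [hx.2]
  have e1 : (x:ℂ) ^ ((p:ℂ) - 1) = ((x ^ (p - 1) : ℝ) : ℂ) := by
    rw [Complex.ofReal_cpow hx0]; push_cast; ring_nf
  have e2 : (1 - (x:ℂ)) ^ ((q:ℂ) - 1) = (((1 - x) ^ (q - 1) : ℝ) : ℂ) := by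
    rw [show (1 - (x:ℂ)) = (((1 - x : ℝ)):ℂ) by push_cast; ring, Complex.ofReal_cpow hx1]
    push_cast; ring_nf
  simp [e1, e2, ← Complex.ofReal_mul]

lemma betaReal_value {p q : ℝ} (hp : 0 < p) (hq : 0 < q) :
    ∫ t in Ioo (0:ℝ) 1, t ^ (p - 1) * (1 - t) ^ (q - 1)
      = Real.Gamma p * Real.Gamma q / Real.Gamma (p + q) := by
  have hB := Complex.Gamma_mul_Gamma_eq_betaIntegral
    (s := (p:ℂ)) (t := (q:ℂ)) (by simpa using hp) (by simpa using hq)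
  have hbeta : Complex.betaIntegral p q = ((∫ t in Ioo (0:ℝ) 1, t ^ (p - 1) * (1 - t) ^ (q - 1) : ℝ) : ℂ) := by
    rw [Complex.betaIntegral]
    rw [intervalIntegral.integral_of_le zero_le_one, MeasureTheory.integral_Ioc_eq_integral_Ioo]
    rw [show ((∫ t in Ioo (0:ℝ) 1, t ^ (p - 1) * (1 - t) ^ (q - 1) : ℝ) : ℂ)
      = ∫ t in Ioo (0:ℝ) 1, ((t ^ (p - 1) * (1 - t) ^ (q - 1) : ℝ) : ℂ) from (integral_ofReal).symm]
    refine setIntegral_congr_fun measurableSet_Ioo (fun x hx => ?_)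
    have hx0 : (0:ℝ) ≤ x := le_of_lt hx.1
    have hx1 : (0:ℝ) ≤ 1 - x := by linarith [hx.2]
    rw [show (1 - (x:ℂ)) = (((1 - x : ℝ)):ℂ) by push_cast; ring]
    rw [show ((p:ℂ) - 1) = (((p - 1 : ℝ)):ℂ) by push_cast; ring]
    rw [show ((q:ℂ) - 1) = (((q - 1 : ℝ)):ℂ) by push_cast; ring]
    rw [← Complex.ofReal_cpow hx0, ← Complex.ofReal_cpow hx1]
    push_cast; ring
  rw [hbeta, Complex.Gamma_ofReal, Complex.Gamma_ofReal, show ((p:ℂ) + q) = ((p + q : ℝ) : ℂ) by push_cast; ring, Complex.Gamma_ofReal, ← Complex.ofReal_mul, ← Complex.ofReal_mul] at hB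
  have := Complex.ofReal_injective hB
  have hΓ : Real.Gamma (p + q) ≠ 0 := (Real.Gamma_pos_of_pos (by linarith)).ne'
  field_simp [this]; rw [this]; ring
lemma mellin_value {σ : ℝ} (hσ0 : 0 < σ) (hσ1 : σ < 1) {a : ℝ} (ha : 0 < a) :
    ∫ u in Ioi (0:ℝ), u ^ (σ - 1) / (u + a)
      = Real.Gamma σ * Real.Gamma (1 - σ) * a ^ (σ - 1) := by
  set f : ℝ → ℝ := fun t => a * t / (1 - t) with hf
  have himg : f '' Ioo (0:ℝ) 1 = Ioi (0:ℝ) := by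
    ext u
    constructor
    · rintro ⟨t, ht, rfl⟩
      exact div_pos (mul_pos ha ht.1) (by linarith [ht.2])
    · intro hu
      have hu' : (0:ℝ) < u := hu
      refine ⟨u / (u + a), ⟨div_pos hu' (by linarith), ?_⟩, ?_⟩
      · rw [div_lt_one (by linarith)]; linarith
      · have h1 : u + a ≠ 0 := by positivity
        simp only [hf]
        field_simp; rw [show u + a - u = a by ring]; exact div_self ha.ne'
  have hderiv : ∀ t ∈ Ioo (0:ℝ) 1, HasDerivWithinAt f (a / (1 - t) ^ 2) (Ioo (0:ℝ) 1) t := by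
    intro t ht
    have h1 : (1:ℝ) - t ≠ 0 := by have := ht.2; intro h; nlinarith [sub_eq_zero.mp h]
    have h2 : HasDerivAt f ((a * (1 - t) - a * t * (-1)) / (1 - t) ^ 2) t := by
      have := ((hasDerivAt_id t).const_mul a).div ((hasDerivAt_id t).const_sub 1) h1
      exact this.congr_deriv (by simp only [id]; ring)
    have heq : (a * (1 - t) - a * t * (-1)) / (1 - t) ^ 2 = a / (1 - t) ^ 2 := by ring_nf
    rw [heq] at h2
    exact h2.hasDerivWithinAt
  have hinj : InjOn f (Ioo (0:ℝ) 1) := by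
    intro t1 h1 t2 h2 h
    have e1 : (1:ℝ) - t1 ≠ 0 := by have := h1.2; intro h; nlinarith [sub_eq_zero.mp h]
    have e2 : (1:ℝ) - t2 ≠ 0 := by have := h2.2; intro h; nlinarith [sub_eq_zero.mp h]
    simp only [hf] at h
    field_simp at h
    nlinarith [h]
  have key := integral_image_eq_integral_abs_deriv_smul measurableSet_Ioo hderiv hinj
    (fun u : ℝ => u ^ (σ - 1) / (u + a))
  rw [himg] at key
  rw [key]
  have hcg : ∀ t ∈ Ioo (0:ℝ) 1, |a / (1 - t) ^ 2| • (f t ^ (σ - 1) / (f t + a))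
      = a ^ (σ - 1) * (t ^ (σ - 1) * (1 - t) ^ ((1 - σ) - 1)) := by
    intro t ht
    have ht0 : 0 < t := ht.1
    have ht1 : 0 < 1 - t := by linarith [ht.2]
    have hft : f t = a * t / (1 - t) := rfl
    have hfa : f t + a = a / (1 - t) := by rw [hft]; field_simp; ring
    have key2 : (a * t / (1 - t)) ^ (σ - 1)
        = a ^ (σ - 1) * t ^ (σ - 1) * ((1 - t) ^ (σ - 1))⁻¹ := by
      rw [Real.div_rpow (by positivity) ht1.le, Real.mul_rpow ha.le ht0.le, div_eq_mul_inv]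
    have e3 : (1 - t) ^ ((1 - σ) - 1) * (1 - t) ^ (σ - 1) = (1 - t)⁻¹ := by
      rw [← Real.rpow_add ht1, show ((1 - σ) - 1) + (σ - 1) = (-1 : ℝ) by ring,
        Real.rpow_neg_one]
    have hJ : (0:ℝ) < (1 - t) ^ (σ - 1) := Real.rpow_pos_of_pos ht1 _
    rw [smul_eq_mul, abs_of_pos (by positivity), hfa, hft, key2]
    have hXX : (1 - t) ^ ((1 - σ) - 1) = ((1 - t) * (1 - t) ^ (σ - 1))⁻¹ := by
      refine eq_inv_of_mul_eq_one_left ?_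
      rw [mul_comm (1 - t) _, ← mul_assoc, e3, inv_mul_cancel₀ ht1.ne']
    rw [hXX]
    field_simp
  rw [setIntegral_congr_fun measurableSet_Ioo hcg, integral_const_mul,
    betaReal_value hσ0 (by linarith), show σ + (1 - σ) = 1 by ring, Real.Gamma_one]
  ring
open MeasureTheory Filter Set

section
variable {ν ω : ℝ} (hν0 : 0 < ν) (hν1 : ν < 1) (hω : 1 < ω)

include hν0 hν1 hω in
lemma summ1 : Summable (fun s : ℕ =>
    Real.Gamma ((s : ℝ) + 1) * Real.Gamma (1 - ν) / Real.Gamma ((s : ℝ) - ν + 2) /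
      ω ^ (s + 1)) := by
  have hω0 : (0:ℝ) < ω := by linarith
  refine summable_of_ratio_norm_eventually_le (r := ω⁻¹) (by rw [inv_lt_one_iff₀]; right; exact hω)
    (Filter.Eventually.of_forall fun s => ?_)
  have h1 : (0:ℝ) < (s:ℝ) + 1 := by positivity
  have h2 : (0:ℝ) < (s:ℝ) - ν + 2 := by
    have : (0:ℝ) ≤ (s:ℝ) := Nat.cast_nonneg s
    linarith
  have hG1 : 0 < Real.Gamma ((s:ℝ) + 1) := Real.Gamma_pos_of_pos h1
  have hG2 : 0 < Real.Gamma ((s:ℝ) - ν + 2) := Real.Gamma_pos_of_pos h2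
  have hG3 : 0 < Real.Gamma (1 - ν) := Real.Gamma_pos_of_pos (by linarith)
  have e1 : Real.Gamma (((s:ℕ)+1 : ℕ) + 1 : ℝ) = ((s:ℝ) + 1) * Real.Gamma ((s:ℝ) + 1) := by
    rw [show ((((s:ℕ)+1 : ℕ) : ℝ) + 1) = ((s:ℝ) + 1) + 1 by push_cast; ring,
      Real.Gamma_add_one h1.ne']
  have e2 : Real.Gamma ((((s:ℕ)+1 : ℕ) : ℝ) - ν + 2) = ((s:ℝ) - ν + 2) * Real.Gamma ((s:ℝ) - ν + 2) := by
    rw [show ((((s:ℕ)+1 : ℕ) : ℝ) - ν + 2) = ((s:ℝ) - ν + 2) + 1 by push_cast; ring,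
      Real.Gamma_add_one h2.ne']
  have key : Real.Gamma (((s:ℕ)+1 : ℕ) + 1 : ℝ) * Real.Gamma (1 - ν) /
      Real.Gamma ((((s:ℕ)+1 : ℕ) : ℝ) - ν + 2) / ω ^ ((s+1) + 1)
      = (((s:ℝ)+1) / ((s:ℝ)-ν+2)) *
        (ω⁻¹ * (Real.Gamma ((s:ℝ) + 1) * Real.Gamma (1 - ν) / Real.Gamma ((s:ℝ) - ν + 2) /
          ω ^ (s + 1))) := by
    rw [e1, e2, pow_succ]
    field_simp
  rw [Real.norm_eq_abs, Real.norm_eq_abs, abs_of_pos (by rw [e1, e2]; positivity),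
    abs_of_pos (by positivity), key]
  have hle : ((s:ℝ)+1) / ((s:ℝ)-ν+2) ≤ 1 := (div_le_one h2).mpr (by linarith)
  have hpos : 0 < ω⁻¹ * (Real.Gamma ((s:ℝ) + 1) * Real.Gamma (1 - ν) /
      Real.Gamma ((s:ℝ) - ν + 2) / ω ^ (s + 1)) := by positivity
  nlinarith [hpos, hle]

include hν0 hν1 hω in
lemma summ2 : Summable (fun s : ℕ =>
    Real.Gamma (ν + s) / (Real.Gamma ν * (s.factorial : ℝ)) * ω ^ (-((s : ℝ) + ν))) := by
  have hω0 : (0:ℝ) < ω := by linarith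
  refine summable_of_ratio_norm_eventually_le (r := ω⁻¹) (by rw [inv_lt_one_iff₀]; right; exact hω)
    (Filter.Eventually.of_forall fun s => ?_)
  have h1 : (0:ℝ) < ν + s := by positivity
  have hG1 : 0 < Real.Gamma (ν + s) := Real.Gamma_pos_of_pos h1
  have hGν : 0 < Real.Gamma ν := Real.Gamma_pos_of_pos hν0
  have hfac : (0:ℝ) < (s.factorial : ℝ) := by exact_mod_cast s.factorial_pos
  have hp : (0:ℝ) < ω ^ (-((s:ℝ) + ν)) := Real.rpow_pos_of_pos hω0 _
  have e1 : Real.Gamma (ν + (((s:ℕ)+1 : ℕ) : ℝ)) = (ν + s) * Real.Gamma (ν + s) := by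
    rw [show (ν + (((s:ℕ)+1 : ℕ) : ℝ)) = (ν + s) + 1 by push_cast; ring,
      Real.Gamma_add_one h1.ne']
  have e2 : (((s+1).factorial : ℕ) : ℝ) = ((s:ℝ) + 1) * (s.factorial : ℝ) := by
    rw [Nat.factorial_succ]; push_cast; ring
  have e3 : ω ^ (-((((s:ℕ)+1 : ℕ) : ℝ) + ν)) = ω⁻¹ * ω ^ (-((s:ℝ) + ν)) := by
    rw [show (-((((s:ℕ)+1:ℕ):ℝ) + ν)) = (-1) + (-((s:ℝ) + ν)) by push_cast; ring,
      Real.rpow_add hω0, Real.rpow_neg_one]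
  have key : Real.Gamma (ν + (((s:ℕ)+1 : ℕ) : ℝ)) / (Real.Gamma ν * (((s+1).factorial : ℕ) : ℝ)) *
      ω ^ (-((((s:ℕ)+1 : ℕ) : ℝ) + ν))
      = ((ν + s) / ((s:ℝ) + 1)) *
        (ω⁻¹ * (Real.Gamma (ν + s) / (Real.Gamma ν * (s.factorial : ℝ)) * ω ^ (-((s:ℝ) + ν)))) := by
    rw [e1, e2, e3]
    field_simp
  rw [Real.norm_eq_abs, Real.norm_eq_abs, abs_of_pos (by rw [e1, e2, e3]; positivity),
    abs_of_pos (by positivity), key]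
  have hle : (ν + s) / ((s:ℝ) + 1) ≤ 1 := (div_le_one (by positivity)).mpr (by linarith)
  have hpos : 0 < ω⁻¹ * (Real.Gamma (ν + s) / (Real.Gamma ν * (s.factorial : ℝ)) *
      ω ^ (-((s:ℝ) + ν))) := by positivity
  nlinarith [hpos, hle]
end
open MeasureTheory Filter Set

lemma swap_lemma {ω : ℝ} (hω : 1 < ω) {w : ℝ → ℝ} (hw_int : IntegrableOn w (Ioo 0 1))
    (hw_nonneg : ∀ t ∈ Ioo (0:ℝ) 1, 0 ≤ w t)
    (hsum : Summable (fun s : ℕ => (∫ t in Ioo (0:ℝ) 1, t ^ s * w t) / ω ^ (s + 1))) :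
    ∫ t in Ioo (0:ℝ) 1, w t / (ω - t)
      = ∑' s : ℕ, (∫ t in Ioo (0:ℝ) 1, t ^ s * w t) / ω ^ (s + 1) := by
  have hω0 : (0:ℝ) < ω := by linarith
  set F : ℕ → ℝ → ℝ := fun s t => t ^ s * w t * (ω ^ (s + 1))⁻¹ with hF
  have hmeas : ∀ s : ℕ, AEStronglyMeasurable (F s) (volume.restrict (Ioo (0:ℝ) 1)) := by
    intro s
    exact ((continuous_pow s).aestronglyMeasurable.mul hw_int.1).mul aestronglyMeasurable_const
  have hbound : ∀ s : ℕ, ∀ᵐ t ∂(volume.restrict (Ioo (0:ℝ) 1)),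
      ‖F s t‖ ≤ ‖w t * (ω ^ (s + 1))⁻¹‖ := by
    intro s
    rw [ae_restrict_iff' measurableSet_Ioo]
    refine Filter.Eventually.of_forall fun t ht => ?_
    have h1 : |t ^ s| ≤ 1 := by
      rw [abs_pow]
      exact pow_le_one₀ (abs_nonneg t) (abs_le.mpr ⟨by linarith [ht.1], le_of_lt ht.2⟩)
    calc ‖F s t‖ = |t ^ s| * ‖w t * (ω ^ (s + 1))⁻¹‖ := by
          simp [hF, abs_mul, Real.norm_eq_abs, mul_assoc]
      _ ≤ 1 * ‖w t * (ω ^ (s + 1))⁻¹‖ := by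
          apply mul_le_mul_of_nonneg_right h1 (norm_nonneg _)
      _ = _ := one_mul _
  have hF_int : ∀ s : ℕ, Integrable (F s) (volume.restrict (Ioo (0:ℝ) 1)) := fun s =>
    Integrable.mono (hw_int.mul_const _) (hmeas s) (hbound s)
  have hval : ∀ s : ℕ, ∫ t in Ioo (0:ℝ) 1, F s t
      = (∫ t in Ioo (0:ℝ) 1, t ^ s * w t) / ω ^ (s + 1) := by
    intro s
    rw [div_eq_mul_inv, ← integral_mul_const]
  have hnonneg : ∀ s : ℕ, ∀ᵐ t ∂(volume.restrict (Ioo (0:ℝ) 1)), 0 ≤ F s t := by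
    intro s
    rw [ae_restrict_iff' measurableSet_Ioo]
    refine Filter.Eventually.of_forall fun t ht => ?_
    have := hw_nonneg t ht
    have ht0 : 0 ≤ t := le_of_lt ht.1
    positivity
  have hnorm : ∀ s : ℕ, ∫ t in Ioo (0:ℝ) 1, ‖F s t‖ = ∫ t in Ioo (0:ℝ) 1, F s t := by
    intro s
    refine integral_congr_ae ?_
    filter_upwards [hnonneg s] with t ht
    exact Real.norm_of_nonneg ht
  have hF_sum : Summable fun s : ℕ => ∫ t in Ioo (0:ℝ) 1, ‖F s t‖ := by
    apply Summable.congr hsum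
    intro s
    rw [hnorm s, hval s]
  have hswap := MeasureTheory.integral_tsum_of_summable_integral_norm hF_int hF_sum
  have hptwise : ∀ t ∈ Ioo (0:ℝ) 1, (∑' s : ℕ, F s t) = w t / (ω - t) := by
    intro t ht
    have ht0 : 0 ≤ t := le_of_lt ht.1
    have htω : t / ω < 1 := by
      rw [div_lt_one hω0]; linarith [ht.2]
    have hre : ∀ s : ℕ, F s t = (w t / ω) * (t / ω) ^ s := by
      intro s
      rw [hF]
      simp only [div_pow, pow_succ]
      field_simp
    rw [tsum_congr hre, tsum_mul_left, tsum_geometric_of_lt_one (by positivity) htω]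
    have hωt : ω - t ≠ 0 := by intro h; nlinarith [ht.2, sub_eq_zero.mp h]
    have h2 : (1:ℝ) - t / ω = (ω - t) / ω := by field_simp
    rw [h2]
    field_simp
  calc ∫ t in Ioo (0:ℝ) 1, w t / (ω - t)
      = ∫ t in Ioo (0:ℝ) 1, ∑' s : ℕ, F s t :=
        (setIntegral_congr_fun measurableSet_Ioo fun t ht => (hptwise t ht).symm)
    _ = ∑' s : ℕ, ∫ t in Ioo (0:ℝ) 1, F s t := hswap.symm
    _ = _ := tsum_congr hval

/-- For every `0 < ν < 1` and `ω > 1`,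
`∫_0^∞ 1/((1+x)^ν (ω+x)) dx = −Σ_{s=0}^∞ (Γ(s+1)Γ(1−ν)/Γ(s−ν+2)) ω^{−(s+1)}
+ (π/sin(πν)) Σ_{s=0}^∞ (Γ(ν+s)/(Γ(ν) s!)) ω^{−(s+ν)}`, both series converging
for `ω > 1`. -/
theorem stieltjes_transform_exact_expansion (ν : ℝ) (hν0 : 0 < ν) (hν1 : ν < 1)
    (ω : ℝ) (hω : 1 < ω) :
    Summable (fun s : ℕ =>
      Real.Gamma ((s : ℝ) + 1) * Real.Gamma (1 - ν) / Real.Gamma ((s : ℝ) - ν + 2) /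
        ω ^ (s + 1)) ∧
    Summable (fun s : ℕ =>
      Real.Gamma (ν + s) / (Real.Gamma ν * (s.factorial : ℝ)) * ω ^ (-((s : ℝ) + ν))) ∧
    (∫ x in Ioi (0:ℝ), 1 / ((1 + x) ^ ν * (ω + x)))
      = -(∑' s : ℕ,
            Real.Gamma ((s : ℝ) + 1) * Real.Gamma (1 - ν) / Real.Gamma ((s : ℝ) - ν + 2) /
              ω ^ (s + 1))
        + Real.pi / Real.sin (Real.pi * ν) *
            ∑' s : ℕ,
              Real.Gamma (ν + s) / (Real.Gamma ν * (s.factorial : ℝ)) *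
                ω ^ (-((s : ℝ) + ν)) := by
  have hω0 : (0:ℝ) < ω := by linarith
  have hS1 := summ1 hν0 hν1 hω
  have hS2 := summ2 hν0 hν1 hω
  refine ⟨hS1, hS2, ?_⟩
  set a : ℝ := ω - 1 with ha_def
  have ha : 0 < a := by rw [ha_def]; linarith
  have hGν : 0 < Real.Gamma ν := Real.Gamma_pos_of_pos hν0
  have hGν' : 0 < Real.Gamma (1 - ν) := Real.Gamma_pos_of_pos (by linarith)
  set g : ℝ → ℝ := fun u => u ^ (-ν) / (u + a) with hg
  have hmel : ∫ u in Ioi (0:ℝ), g u = Real.Gamma (1 - ν) * Real.Gamma ν * a ^ (-ν) := by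
    have h := mellin_value (σ := 1 - ν) (by linarith) (by linarith) ha
    rw [show (1 - ν) - 1 = -ν by ring, show 1 - (1 - ν) = ν by ring] at h
    exact h
  have hgmeas : Measurable g := by rw [hg]; fun_prop
  -- integrability on (0,1)
  have hint1 : IntegrableOn g (Ioo (0:ℝ) 1) := by
    have hbase : IntegrableOn (fun t : ℝ => t ^ ((1 - ν) - 1) * (1 - t) ^ ((1:ℝ) - 1))
        (Ioo (0:ℝ) 1) := betaReal_integrable (by linarith) one_pos
    refine Integrable.mono (hbase.mul_const a⁻¹) (hgmeas.aestronglyMeasurable) ?_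
    rw [ae_restrict_iff' measurableSet_Ioo]
    refine .of_forall fun t ht => ?_
    have ht0 : 0 < t := ht.1
    have ht1 : t < 1 := ht.2
    have h1 : (0:ℝ) < t ^ (-ν) := Real.rpow_pos_of_pos ht0 _
    have e : t ^ ((1 - ν) - 1) * (1 - t) ^ ((1:ℝ) - 1) * a⁻¹ = t ^ (-ν) * a⁻¹ := by
      rw [show (1 - ν) - 1 = -ν by ring, show (1:ℝ) - 1 = 0 by ring, Real.rpow_zero, mul_one]
    have hgt : g t = t ^ (-ν) / (t + a) := rfl
    rw [Real.norm_eq_abs, Real.norm_eq_abs, hgt, e,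
      abs_of_pos (div_pos h1 (by linarith)), abs_of_pos (by positivity), div_eq_mul_inv]
    gcongr
    linarith
  -- integrability on (1,∞)
  have hint2 : IntegrableOn g (Ioi (1:ℝ)) := by
    have hbase : IntegrableOn (fun u : ℝ => u ^ (-ν - 1)) (Ioi (1:ℝ)) :=
      integrableOn_Ioi_rpow_of_lt (by linarith) one_pos
    refine Integrable.mono hbase (hgmeas.aestronglyMeasurable) ?_
    rw [ae_restrict_iff' measurableSet_Ioi]
    refine .of_forall fun u hu => ?_
    have hu1 : (1:ℝ) < u := hu
    have hu0 : (0:ℝ) < u := by linarith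
    have h1 : (0:ℝ) < u ^ (-ν) := Real.rpow_pos_of_pos hu0 _
    have e : u ^ (-ν - 1) = u ^ (-ν) / u := by
      rw [Real.rpow_sub hu0, Real.rpow_one]
    have hgu : g u = u ^ (-ν) / (u + a) := rfl
    rw [Real.norm_eq_abs, Real.norm_eq_abs, hgu, e,
      abs_of_pos (div_pos h1 (by linarith)), abs_of_pos (div_pos h1 hu0)]
    gcongr
    linarith
  -- split the Mellin integral
  have hsplit : ∫ u in Ioi (0:ℝ), g u = (∫ u in Ioo (0:ℝ) 1, g u) + ∫ u in Ioi (1:ℝ), g u := by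
    have hunion : Ioo (0:ℝ) 1 ∪ Ici 1 = Ioi 0 := Ioo_union_Ici_eq_Ioi zero_lt_one
    have hdisj : Disjoint (Ioo (0:ℝ) 1) (Ici 1) :=
      disjoint_left.mpr fun x hx hx' => absurd hx.2 (not_lt.mpr hx')
    have hIci : IntegrableOn g (Ici (1:ℝ)) := by
      rwa [integrableOn_Ici_iff_integrableOn_Ioi]
    rw [← hunion, setIntegral_union hdisj measurableSet_Ici hint1 hIci,
      integral_Ici_eq_integral_Ioi]
  -- LHS integral equals integral of g over (1,∞)
  have himgC : (fun x : ℝ => x + 1) '' Ioi 0 = Ioi (1:ℝ) := by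
    ext u
    simp only [mem_image, mem_Ioi]
    constructor
    · rintro ⟨x, hx, rfl⟩; linarith
    · intro hu; exact ⟨u - 1, by linarith, by ring⟩
  have hC : (∫ x in Ioi (0:ℝ), 1 / ((1 + x) ^ ν * (ω + x))) = ∫ u in Ioi (1:ℝ), g u := by
    have key := integral_image_eq_integral_abs_deriv_smul (s := Ioi (0:ℝ))
      (f := fun x : ℝ => x + 1) (f' := fun _ : ℝ => (1:ℝ)) measurableSet_Ioi
      (fun x _ => ((hasDerivAt_id x).add_const 1).hasDerivWithinAt)
      (fun x _ y _ h => by simpa using h) g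
    rw [himgC] at key
    rw [key]
    refine setIntegral_congr_fun measurableSet_Ioi fun x hx => ?_
    have hx0 : (0:ℝ) < x := hx
    have h1 : (0:ℝ) < 1 + x := by linarith
    show 1 / ((1 + x) ^ ν * (ω + x)) = |(1:ℝ)| • ((x + 1) ^ (-ν) / (x + 1 + a))
    rw [abs_one, one_smul, show (x + 1 : ℝ) = 1 + x by ring,
      show 1 + x + a = ω + x by rw [ha_def]; ring, Real.rpow_neg h1.le]
    rw [one_div, mul_inv, div_eq_mul_inv]
  -- B over (0,1) equals the first series
  have himgB : (fun t : ℝ => 1 - t) '' Ioo 0 1 = Ioo (0:ℝ) 1 := by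
    rw [image_const_sub_Ioo]; norm_num
  have hw1_int : IntegrableOn (fun t : ℝ => (1 - t) ^ (-ν)) (Ioo (0:ℝ) 1) := by
    refine (betaReal_integrable one_pos (by linarith : (0:ℝ) < 1 - ν)).congr_fun
      (fun t ht => ?_) measurableSet_Ioo
    dsimp only; rw [show (1:ℝ) - 1 = 0 by ring, Real.rpow_zero, one_mul,
      show ((1 - ν) - 1 : ℝ) = -ν by ring]
  have hbval1 : ∀ s : ℕ, (∫ t in Ioo (0:ℝ) 1, t ^ s * (1 - t) ^ (-ν))
      = Real.Gamma ((s:ℝ) + 1) * Real.Gamma (1 - ν) / Real.Gamma ((s:ℝ) - ν + 2) := by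
    intro s
    have h := betaReal_value (p := (s:ℝ) + 1) (q := 1 - ν) (by positivity) (by linarith)
    rw [show ((s:ℝ) + 1) + (1 - ν) = (s:ℝ) - ν + 2 by ring] at h
    rw [← h]
    refine setIntegral_congr_fun measurableSet_Ioo fun t ht => ?_
    rw [show ((s:ℝ) + 1) - 1 = ((s:ℕ) : ℝ) by ring, show ((1 - ν) - 1 : ℝ) = -ν by ring,
      Real.rpow_natCast]
  have hB : (∫ u in Ioo (0:ℝ) 1, g u)
      = ∑' s : ℕ, Real.Gamma ((s:ℝ) + 1) * Real.Gamma (1 - ν) / Real.Gamma ((s:ℝ) - ν + 2) /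
          ω ^ (s + 1) := by
    have key := integral_image_eq_integral_abs_deriv_smul (s := Ioo (0:ℝ) 1)
      (f := fun t : ℝ => 1 - t) (f' := fun _ : ℝ => (-1:ℝ)) measurableSet_Ioo
      (fun t _ => ((hasDerivAt_id t).const_sub 1).hasDerivWithinAt)
      (fun x _ y _ h => by dsimp at h; linarith) g
    rw [himgB] at key
    rw [key]
    have hcongr : ∀ t ∈ Ioo (0:ℝ) 1, |(-1:ℝ)| • g (1 - t) = (1 - t) ^ (-ν) / (ω - t) := by
      intro t ht
      show |(-1:ℝ)| • ((1 - t) ^ (-ν) / (1 - t + a)) = _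
      rw [abs_neg, abs_one, one_smul, show 1 - t + a = ω - t by rw [ha_def]; ring]
    rw [setIntegral_congr_fun measurableSet_Ioo hcongr]
    have hsum1' : Summable (fun s : ℕ =>
        (∫ t in Ioo (0:ℝ) 1, t ^ s * (1 - t) ^ (-ν)) / ω ^ (s + 1)) :=
      hS1.congr fun s => by rw [hbval1 s]
    rw [swap_lemma hω hw1_int (fun t ht => Real.rpow_nonneg (by linarith [ht.2]) _) hsum1']
    exact tsum_congr fun s => by rw [hbval1 s]
  -- second weight
  have hw2_int : IntegrableOn (fun t : ℝ => t ^ (ν - 1) * (1 - t) ^ (-ν)) (Ioo (0:ℝ) 1) := by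
    refine (betaReal_integrable hν0 (by linarith : (0:ℝ) < 1 - ν)).congr_fun
      (fun t ht => ?_) measurableSet_Ioo
    rw [show ((1 - ν) - 1 : ℝ) = -ν by ring]
  have hbval2 : ∀ s : ℕ, (∫ t in Ioo (0:ℝ) 1, t ^ s * (t ^ (ν - 1) * (1 - t) ^ (-ν)))
      = Real.Gamma (ν + s) * Real.Gamma (1 - ν) / (s.factorial : ℝ) := by
    intro s
    have h := betaReal_value (p := ν + s) (q := 1 - ν) (by positivity) (by linarith)
    rw [show (ν + (s:ℝ)) + (1 - ν) = (s:ℝ) + 1 by ring, Real.Gamma_nat_eq_factorial s] at h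
    rw [← h]
    refine setIntegral_congr_fun measurableSet_Ioo fun t ht => ?_
    have ht0 : (0:ℝ) < t := ht.1
    rw [← Real.rpow_natCast t s, ← mul_assoc, ← Real.rpow_add ht0,
      show (s:ℝ) + (ν - 1) = (ν + (s:ℝ)) - 1 by ring, show ((1 - ν) - 1 : ℝ) = -ν by ring]
  have hterm : ∀ s : ℕ,
      Real.Gamma (ν + s) / (Real.Gamma ν * (s.factorial : ℝ)) * ω ^ (-((s:ℝ) + ν)) *
        (Real.Gamma ν * Real.Gamma (1 - ν) * ω ^ (ν - 1))
      = Real.Gamma (ν + s) * Real.Gamma (1 - ν) / (s.factorial : ℝ) / ω ^ (s + 1) := by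
    intro s
    have hfac : ((s.factorial : ℝ)) ≠ 0 := by exact_mod_cast s.factorial_ne_zero
    have e : ω ^ (-((s:ℝ) + ν)) * ω ^ (ν - 1) = ((ω : ℝ) ^ (s + 1))⁻¹ := by
      rw [← Real.rpow_add hω0, show -((s:ℝ) + ν) + (ν - 1) = -((s:ℝ) + 1) by ring,
        Real.rpow_neg hω0.le, show ((s:ℝ) + 1) = (((s + 1 : ℕ)) : ℝ) by push_cast; ring,
        Real.rpow_natCast]
    calc Real.Gamma (ν + s) / (Real.Gamma ν * (s.factorial : ℝ)) * ω ^ (-((s:ℝ) + ν)) *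
          (Real.Gamma ν * Real.Gamma (1 - ν) * ω ^ (ν - 1))
        = Real.Gamma (ν + s) * Real.Gamma (1 - ν) / (s.factorial : ℝ) *
            (ω ^ (-((s:ℝ) + ν)) * ω ^ (ν - 1)) * (Real.Gamma ν / Real.Gamma ν) := by
          field_simp
      _ = _ := by rw [e, div_self hGν.ne', mul_one, div_eq_mul_inv _ ((ω : ℝ) ^ (s + 1))]
  have hsum2' : Summable (fun s : ℕ =>
      (∫ t in Ioo (0:ℝ) 1, t ^ s * (t ^ (ν - 1) * (1 - t) ^ (-ν))) / ω ^ (s + 1)) := by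
    refine (hS2.mul_right (Real.Gamma ν * Real.Gamma (1 - ν) * ω ^ (ν - 1))).congr fun s => ?_
    rw [hbval2 s, hterm s]
  have hw2_nonneg : ∀ t ∈ Ioo (0:ℝ) 1, 0 ≤ t ^ (ν - 1) * (1 - t) ^ (-ν) := by
    intro t ht
    exact mul_nonneg (Real.rpow_nonneg ht.1.le _) (Real.rpow_nonneg (by linarith [ht.2]) _)
  have hA2 : (∫ t in Ioo (0:ℝ) 1, t ^ (ν - 1) * (1 - t) ^ (-ν) / (ω - t))
      = ∑' s : ℕ, Real.Gamma (ν + s) * Real.Gamma (1 - ν) / (s.factorial : ℝ) / ω ^ (s + 1) := by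
    rw [swap_lemma hω hw2_int hw2_nonneg hsum2']
    exact tsum_congr fun s => by rw [hbval2 s]
  -- value of A via substitution u ↦ u/(u+1)
  have himgA : (fun u : ℝ => u / (u + 1)) '' Ioi 0 = Ioo (0:ℝ) 1 := by
    ext t
    simp only [mem_image, mem_Ioi, mem_Ioo]
    constructor
    · rintro ⟨u, hu, rfl⟩
      have hu0 : (0:ℝ) < u := hu
      constructor
      · positivity
      · rw [div_lt_one (by linarith)]; linarith
    · rintro ⟨ht0, ht1⟩
      refine ⟨t / (1 - t), div_pos ht0 (by linarith), ?_⟩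
      have h1 : (1:ℝ) - t ≠ 0 := by intro h; nlinarith [sub_eq_zero.mp h]
      field_simp; ring
  have hA : (∫ t in Ioo (0:ℝ) 1, t ^ (ν - 1) * (1 - t) ^ (-ν) / (ω - t))
      = ω ^ (ν - 1) * a ^ (-ν) * (Real.Gamma ν * Real.Gamma (1 - ν)) := by
    have hderivA : ∀ u ∈ Ioi (0:ℝ), HasDerivWithinAt (fun u : ℝ => u / (u + 1))
        ((1 * (u + 1) - u * 1) / (u + 1) ^ 2) (Ioi 0) u := by
      intro u hu
      have hu0 : (0:ℝ) < u := hu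
      exact ((hasDerivAt_id u).div ((hasDerivAt_id u).add_const 1)
        (by positivity)).hasDerivWithinAt
    have hinjA : InjOn (fun u : ℝ => u / (u + 1)) (Ioi 0) := by
      intro u1 h1 u2 h2 h
      have hu1 : (0:ℝ) < u1 := h1
      have hu2 : (0:ℝ) < u2 := h2
      have e1 : u1 + 1 ≠ 0 := by positivity
      have e2 : u2 + 1 ≠ 0 := by positivity
      dsimp at h
      field_simp at h
      nlinarith [h]
    have key := integral_image_eq_integral_abs_deriv_smul (s := Ioi (0:ℝ))
      (f := fun u : ℝ => u / (u + 1)) (f' := fun u : ℝ => (1 * (u + 1) - u * 1) / (u + 1) ^ 2)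
      measurableSet_Ioi hderivA hinjA
      (fun t : ℝ => t ^ (ν - 1) * (1 - t) ^ (-ν) / (ω - t))
    rw [himgA] at key
    rw [key]
    have hcongr : ∀ u ∈ Ioi (0:ℝ), |(1 * (u + 1) - u * 1) / (u + 1) ^ 2| •
        ((u / (u + 1)) ^ (ν - 1) * (1 - u / (u + 1)) ^ (-ν) / (ω - u / (u + 1)))
        = a⁻¹ * (u ^ (ν - 1) / (u + ω / a)) := by
      intro u hu
      have hu0 : (0:ℝ) < u := hu
      have hu1 : (0:ℝ) < u + 1 := by linarith
      have e1 : (1:ℝ) - u / (u + 1) = 1 / (u + 1) := by field_simp; ring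
      have e2 : ω - u / (u + 1) = (a * u + ω) / (u + 1) := by
        rw [ha_def]; field_simp; ring
      have e3 : (u / (u + 1)) ^ (ν - 1) = u ^ (ν - 1) * ((u + 1) ^ (ν - 1))⁻¹ := by
        rw [Real.div_rpow hu0.le hu1.le, div_eq_mul_inv]
      have e4 : ((1 : ℝ) / (u + 1)) ^ (-ν) = (u + 1) ^ ν := by
        rw [one_div, Real.inv_rpow hu1.le, Real.rpow_neg hu1.le, inv_inv]
      have e5 : (u + 1) ^ ν = (u + 1) ^ (ν - 1) * (u + 1) := by
        rw [← Real.rpow_add_one hu1.ne', sub_add_cancel]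
      have habs : |(1 * (u + 1) - u * 1) / (u + 1) ^ 2| = 1 / (u + 1) ^ 2 := by
        rw [show (1 * (u + 1) - u * 1 : ℝ) = 1 by ring, abs_of_pos (by positivity)]
      have hJ : (0:ℝ) < (u + 1) ^ (ν - 1) := Real.rpow_pos_of_pos hu1 _
      have hden : (0:ℝ) < a * u + ω := by positivity
      have hU : (0:ℝ) < u ^ (ν - 1) := Real.rpow_pos_of_pos hu0 _
      rw [smul_eq_mul, habs, e1, e2, e3, e4, e5]
      have hwa : u + ω / a = (a * u + ω) / a := by field_simp
      rw [hwa]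
      field_simp
    rw [setIntegral_congr_fun measurableSet_Ioi hcongr, integral_const_mul]
    have hmelA := mellin_value (σ := ν) hν0 hν1 (div_pos hω0 ha)
    rw [hmelA]
    have e6 : a⁻¹ * (ω / a) ^ (ν - 1) = ω ^ (ν - 1) * a ^ (-ν) := by
      rw [Real.div_rpow hω0.le ha.le]
      have e7 : a ^ (-ν) = ((a : ℝ) ^ (ν - 1) * a)⁻¹ := by
        rw [← Real.rpow_add_one ha.ne', sub_add_cancel, Real.rpow_neg ha.le]
      rw [e7, mul_inv, div_eq_mul_inv]
      ring
    calc a⁻¹ * (Real.Gamma ν * Real.Gamma (1 - ν) * (ω / a) ^ (ν - 1))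
        = (a⁻¹ * (ω / a) ^ (ν - 1)) * (Real.Gamma ν * Real.Gamma (1 - ν)) := by ring
      _ = _ := by rw [e6]
  -- deduce the binomial-series value
  have hT2 : Real.Gamma ν * Real.Gamma (1 - ν) * a ^ (-ν)
      = Real.pi / Real.sin (Real.pi * ν) *
          ∑' s : ℕ, Real.Gamma (ν + s) / (Real.Gamma ν * (s.factorial : ℝ)) *
            ω ^ (-((s:ℝ) + ν)) := by
    rw [← Real.Gamma_mul_Gamma_one_sub ν]
    have h1 : (∑' s : ℕ, Real.Gamma (ν + s) * Real.Gamma (1 - ν) / (s.factorial : ℝ) / ω ^ (s + 1))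
        = (∑' s : ℕ, Real.Gamma (ν + s) / (Real.Gamma ν * (s.factorial : ℝ)) *
            ω ^ (-((s:ℝ) + ν))) * (Real.Gamma ν * Real.Gamma (1 - ν) * ω ^ (ν - 1)) := by
      rw [← tsum_mul_right]
      exact tsum_congr fun s => (hterm s).symm
    have h2 := hA.symm.trans hA2
    rw [h1] at h2
    have hc : (0:ℝ) < Real.Gamma ν * Real.Gamma (1 - ν) * ω ^ (ν - 1) := by positivity
    have h3 : a ^ (-ν) * (Real.Gamma ν * Real.Gamma (1 - ν) * ω ^ (ν - 1))
        = (∑' s : ℕ, Real.Gamma (ν + s) / (Real.Gamma ν * (s.factorial : ℝ)) *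
            ω ^ (-((s:ℝ) + ν))) * (Real.Gamma ν * Real.Gamma (1 - ν) * ω ^ (ν - 1)) := by
      rw [← h2]; ring
    have h4 := mul_right_cancel₀ hc.ne' h3
    rw [h4]
  -- final assembly
  rw [hC, show (∫ u in Ioi (1:ℝ), g u)
      = (∫ u in Ioi (0:ℝ), g u) - ∫ u in Ioo (0:ℝ) 1, g u by rw [hsplit]; ring,
    hmel, hB, show Real.Gamma (1 - ν) * Real.Gamma ν * a ^ (-ν)
      = Real.Gamma ν * Real.Gamma (1 - ν) * a ^ (-ν) by ring, hT2]
  ring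
end
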